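/- Let n ≥ 4 and let (λ', λ'') and (μ', μ'') be bipartitions of n with λ' ≠ λ'' and μ' ≠ μ''. If ff_n(λ', λ'') + ff_n(λ'', λ') = ff_n(μ', μ'') + ff_n(μ'', μ') in the free abelian group on bipartitions of n−1, then (λ', λ'') = (μ', μ'') or (λ', λ'') = (μ'', μ'). -/

import Mathlib

open scoped Classical

noncomputable section

/-- `lam : ℕ → ℕ` is a partition of `n`: a weakly decreasing sequence of
nonnegative integers, eventually zero, with sum `n`. -/
def IsPartitionFun (n : ℕ) (lam : ℕ → ℕ) : Prop :=
  Antitone lam ∧ (Function.support lam).Finite ∧ ∑ᶠ i, lam i = n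

/-- `f_n(λ) = Σ_{i : λ_i > λ_{i+1}} [λ with λ_i decreased by 1]`, an element of the
free abelian group on sequences (for partitions `λ` of `n`, all terms are
partitions of `n−1`, so equality of such elements is equality in the free
abelian group `(P_{n-1})` on partitions of `n−1`). -/
def partDec (lam : ℕ → ℕ) : FreeAbelianGroup (ℕ → ℕ) :=
  ∑ᶠ i ∈ {i : ℕ | lam (i + 1) < lam i},
    FreeAbelianGroup.of (Function.update lam i (lam i - 1))

/-- `p = (λ', λ'')` is a bipartition of `n`: `λ'`, `λ''` are partitions with
`|λ'| + |λ''| = n`. -/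
def IsBipartitionFun (n : ℕ) (p : (ℕ → ℕ) × (ℕ → ℕ)) : Prop :=
  ∃ a b : ℕ, IsPartitionFun a p.1 ∧ IsPartitionFun b p.2 ∧ a + b = n

/-- `ff_n(λ', λ'') = f(λ') ⊗ λ'' + λ' ⊗ f(λ'')`, an element of the free abelian
group on pairs of sequences (for bipartitions of `n`, all terms are bipartitions
of `n−1`, so equalities below are equalities in the free abelian group
`(BP_{n-1})` on bipartitions of `n−1`). -/
def bipartDec (p : (ℕ → ℕ) × (ℕ → ℕ)) : FreeAbelianGroup ((ℕ → ℕ) × (ℕ → ℕ)) :=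
  (∑ᶠ i ∈ {i : ℕ | p.1 (i + 1) < p.1 i},
    FreeAbelianGroup.of (Function.update p.1 i (p.1 i - 1), p.2)) +
  (∑ᶠ i ∈ {i : ℕ | p.2 (i + 1) < p.2 i},
    FreeAbelianGroup.of (p.1, Function.update p.2 i (p.2 i - 1)))

namespace Stmt4

open Function Set

/-- The degree (sum) of a sequence. -/
def deg (l : ℕ → ℕ) : ℕ := ∑ᶠ i, l i

/-- The number of single-box moves turning `l` into `x`. -/
def Nf (l x : ℕ → ℕ) : ℕ :=
  {i : ℕ | l (i + 1) < l i ∧ Function.update l i (l i - 1) = x}.ncard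

lemma ne_of_deg {u v : ℕ → ℕ} (h : deg u ≠ deg v) : u ≠ v :=
  fun he => h (by rw [he])

lemma drops_subset_support (l : ℕ → ℕ) :
    {i : ℕ | l (i + 1) < l i} ⊆ Function.support l := by
  intro i hi
  simp only [Set.mem_setOf_eq] at hi
  simp only [Function.mem_support]
  omega

lemma drops_finite {l : ℕ → ℕ} (hf : (Function.support l).Finite) :
    {i : ℕ | l (i + 1) < l i}.Finite :=
  hf.subset (drops_subset_support l)

lemma deg_upd {l : ℕ → ℕ} (hf : (Function.support l).Finite) {i : ℕ}
    (hi : l (i + 1) < l i) :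
    deg (Function.update l i (l i - 1)) + 1 = deg l := by
  classical
  set T : Finset ℕ := insert i hf.toFinset with hT
  have hiT : i ∈ T := Finset.mem_insert_self _ _
  have hsub : Function.support l ⊆ ↑T := by
    intro j hj
    simp only [hT, Finset.coe_insert, Set.mem_insert_iff]
    exact Or.inr (hf.mem_toFinset.2 hj)
  have hsub2 : Function.support (Function.update l i (l i - 1)) ⊆ ↑T := by
    intro j hj
    rcases eq_or_ne j i with rfl | hne
    · exact hiT
    · have hj' : l j ≠ 0 := by
        simpa [Function.update_of_ne hne] using hj
      exact hsub hj'
  have h1 : deg l = ∑ j ∈ T, l j :=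
    finsum_eq_sum_of_support_subset _ hsub
  have h2 : deg (Function.update l i (l i - 1)) = ∑ j ∈ T, Function.update l i (l i - 1) j :=
    finsum_eq_sum_of_support_subset _ hsub2
  rw [h1, h2, Finset.sum_update_of_mem hiT, Finset.sdiff_singleton_eq_erase]
  have h3 := Finset.add_sum_erase T l hiT
  omega

lemma single_le_deg {l : ℕ → ℕ} (hf : (Function.support l).Finite) (j : ℕ) :
    l j ≤ deg l :=
  single_le_finsum j hf (fun _ => Nat.zero_le _)

lemma eq_zero_of_deg_eq_zero {l : ℕ → ℕ} (hf : (Function.support l).Finite)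
    (h : deg l = 0) : l = fun _ => 0 := by
  funext j
  have := single_le_deg hf j
  omega

lemma exists_drop {l : ℕ → ℕ} (hf : (Function.support l).Finite)
    (h0 : deg l ≠ 0) : ∃ i, l (i + 1) < l i := by
  have hne : hf.toFinset.Nonempty := by
    rcases Finset.eq_empty_or_nonempty hf.toFinset with he | h
    · exfalso
      apply h0
      have : l = fun _ => 0 := by
        funext j
        by_contra hj
        have : j ∈ hf.toFinset := hf.mem_toFinset.2 hj
        simp [he] at this
      rw [this]
      exact finsum_zero
    · exact h
  set i := hf.toFinset.max' hne with hi
  refine ⟨i, ?_⟩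
  have h1 : l i ≠ 0 := hf.mem_toFinset.1 (hf.toFinset.max'_mem hne)
  have h2 : l (i + 1) = 0 := by
    by_contra hc
    have : i + 1 ∈ hf.toFinset := hf.mem_toFinset.2 hc
    have := hf.toFinset.le_max' _ this
    omega
  omega

lemma Nf_ne_zero_iff {l : ℕ → ℕ} (hf : (Function.support l).Finite) (x : ℕ → ℕ) :
    Nf l x ≠ 0 ↔ ∃ i, l (i + 1) < l i ∧ Function.update l i (l i - 1) = x := by
  constructor
  · intro h
    rcases Set.nonempty_of_ncard_ne_zero h with ⟨i, hi⟩
    exact ⟨i, hi⟩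
  · rintro ⟨i, hi⟩
    have hfin : {i : ℕ | l (i + 1) < l i ∧ Function.update l i (l i - 1) = x}.Finite :=
      (drops_finite hf).subset (fun j hj => hj.1)
    have := (Set.ncard_pos hfin).2 ⟨i, hi⟩
    unfold Nf
    omega

lemma Nf_deg {l x : ℕ → ℕ} (hf : (Function.support l).Finite)
    (h : Nf l x ≠ 0) : deg x + 1 = deg l := by
  rcases (Nf_ne_zero_iff hf x).1 h with ⟨i, h1, rfl⟩
  exact deg_upd hf h1

lemma Nf_eq_zero_of_deg_eq_zero {l : ℕ → ℕ} (hf : (Function.support l).Finite)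
    (h : deg l = 0) (x : ℕ → ℕ) : Nf l x = 0 := by
  have hl := eq_zero_of_deg_eq_zero hf h
  unfold Nf
  convert Set.ncard_empty ℕ
  ext i
  simp only [Set.mem_setOf_eq, Set.mem_empty_iff_false, iff_false, not_and]
  intro hc
  rw [hl] at hc
  simp at hc

/-! ### Coefficient extraction -/

def cf (x y : ℕ → ℕ) : FreeAbelianGroup ((ℕ → ℕ) × (ℕ → ℕ)) →+ ℤ :=
  FreeAbelianGroup.lift (fun z => if z = (x, y) then 1 else 0)

lemma cf_of (x y : ℕ → ℕ) (z : (ℕ → ℕ) × (ℕ → ℕ)) :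
    cf x y (FreeAbelianGroup.of z) = if z = (x, y) then 1 else 0 :=
  FreeAbelianGroup.lift_apply_of _ _

lemma cf_sum_fst (α β x y : ℕ → ℕ) (hα : (Function.support α).Finite) :
    cf x y (∑ᶠ i ∈ {i : ℕ | α (i + 1) < α i},
        FreeAbelianGroup.of (Function.update α i (α i - 1), β))
      = if y = β then (Nf α x : ℤ) else 0 := by
  have hfin := drops_finite hα
  rw [finsum_mem_eq_finite_toFinset_sum _ hfin, map_sum]
  simp only [cf_of]
  rcases eq_or_ne y β with rfl | hne
  · rw [if_pos rfl]
    have hcong : ∀ i ∈ hfin.toFinset,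
        (if (Function.update α i (α i - 1), y) = (x, y) then (1:ℤ) else 0)
          = if Function.update α i (α i - 1) = x then 1 else 0 := by
      intro i _
      by_cases h : Function.update α i (α i - 1) = x
      · rw [if_pos (by rw [h]), if_pos h]
      · rw [if_neg (by simp [Prod.ext_iff, h]), if_neg h]
    rw [Finset.sum_congr rfl hcong, Finset.sum_boole]
    congr 1
    have : Nf α x = (hfin.toFinset.filter
        (fun i => Function.update α i (α i - 1) = x)).card := by
      rw [← Set.ncard_coe_finset]
      unfold Nf
      congr 1
      ext i
      simp [hfin.mem_toFinset]
    rw [this]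
  · rw [if_neg hne]
    apply Finset.sum_eq_zero
    intro i _
    rw [if_neg]
    simp [Prod.ext_iff]
    intro _
    exact fun h => hne h.symm

lemma cf_sum_snd (α β x y : ℕ → ℕ) (hβ : (Function.support β).Finite) :
    cf x y (∑ᶠ i ∈ {i : ℕ | β (i + 1) < β i},
        FreeAbelianGroup.of (α, Function.update β i (β i - 1)))
      = if x = α then (Nf β y : ℤ) else 0 := by
  have hfin := drops_finite hβ
  rw [finsum_mem_eq_finite_toFinset_sum _ hfin, map_sum]
  simp only [cf_of]
  rcases eq_or_ne x α with rfl | hne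
  · rw [if_pos rfl]
    have hcong : ∀ i ∈ hfin.toFinset,
        (if (x, Function.update β i (β i - 1)) = (x, y) then (1:ℤ) else 0)
          = if Function.update β i (β i - 1) = y then 1 else 0 := by
      intro i _
      by_cases h : Function.update β i (β i - 1) = y
      · rw [if_pos (by rw [h]), if_pos h]
      · rw [if_neg (by simp [Prod.ext_iff, h]), if_neg h]
    rw [Finset.sum_congr rfl hcong, Finset.sum_boole]
    congr 1
    have : Nf β y = (hfin.toFinset.filter
        (fun i => Function.update β i (β i - 1) = y)).card := by
      rw [← Set.ncard_coe_finset]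
      unfold Nf
      congr 1
      ext i
      simp [hfin.mem_toFinset]
    rw [this]
  · rw [if_neg hne]
    apply Finset.sum_eq_zero
    intro i _
    rw [if_neg]
    simp [Prod.ext_iff]
    intro h
    exact absurd h.symm hne

lemma cf_bipartDec (α β x y : ℕ → ℕ) (hα : (Function.support α).Finite)
    (hβ : (Function.support β).Finite) :
    cf x y (bipartDec (α, β))
      = (if y = β then (Nf α x : ℤ) else 0) + (if x = α then (Nf β y : ℤ) else 0) := by
  unfold bipartDec
  rw [map_add, cf_sum_fst α β x y hα, cf_sum_snd α β x y hβ]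

/-! ### Injectivity of the single-box-removal operator in degree ≥ 3 -/

lemma rel {l m : ℕ → ℕ} {i k : ℕ} (hne : l ≠ m)
    (hi : l (i + 1) < l i) (hk : m (k + 1) < m k)
    (he : Function.update l i (l i - 1) = Function.update m k (m k - 1)) :
    i ≠ k ∧ l i = m i + 1 ∧ m k = l k + 1 ∧ ∀ j, j ≠ i → j ≠ k → l j = m j := by
  have happ : ∀ j, Function.update l i (l i - 1) j = Function.update m k (m k - 1) j :=
    fun j => congrFun he j
  have hik : i ≠ k := by
    rintro rfl
    apply hne
    funext j
    rcases eq_or_ne j i with rfl | hj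
    · have := happ j
      rw [Function.update_self, Function.update_self] at this
      omega
    · have := happ j
      rwa [Function.update_of_ne hj, Function.update_of_ne hj] at this
  refine ⟨hik, ?_, ?_, ?_⟩
  · have := happ i
    rw [Function.update_self, Function.update_of_ne hik] at this
    omega
  · have := happ k
    rw [Function.update_of_ne (Ne.symm hik), Function.update_self] at this
    omega
  · intro j hji hjk
    have := happ j
    rwa [Function.update_of_ne hji, Function.update_of_ne hjk] at this

lemma rect {l : ℕ → ℕ} (hA : Antitone l) (hf : (Function.support l).Finite)
    {i : ℕ} (honly : ∀ j, l (j + 1) < l j → j = i) :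
    (∀ j, j ≤ i → l j = l i) ∧ (∀ j, i < j → l j = 0) := by
  have hflat : ∀ j, j ≠ i → l (j + 1) = l j := by
    intro j hj
    have h1 : l (j + 1) ≤ l j := hA (Nat.le_succ j)
    have h2 : ¬ l (j + 1) < l j := fun hc => hj (honly j hc)
    omega
  constructor
  · have key : ∀ m j, j + m = i → l j = l i := by
      intro m
      induction m with
      | zero => intro j hj; rw [show j = i by omega]
      | succ t ih =>
        intro j hj
        have hji : j ≠ i := by omega
        rw [← hflat j hji]
        exact ih (j + 1) (by omega)
    intro j hj
    exact key (i - j) j (by omega)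
  · have key : ∀ m, l (i + 1 + m) = l (i + 1) := by
      intro m
      induction m with
      | zero => rfl
      | succ t ih =>
        have : i + 1 + t ≠ i := by omega
        rw [show i + 1 + (t + 1) = (i + 1 + t) + 1 by omega, hflat _ this, ih]
    have hz : l (i + 1) = 0 := by
      by_contra hc
      have : Set.Infinite (Function.support l) := by
        apply Set.infinite_of_injective_forall_mem
          (f := fun m : ℕ => i + 1 + m)
        · intro a b hab
          simp only at hab
          omega
        · intro m
          simp only [Function.mem_support]
          rw [key m]
          exact hc
      exact this hf
    intro j hj
    rw [show j = i + 1 + (j - i - 1) by omega, key, hz]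

lemma deg_single {l : ℕ → ℕ} (h : ∀ j, j ≠ 0 → l j = 0) : deg l = l 0 :=
  finsum_eq_single l 0 h

lemma final {l m : ℕ → ℕ} {i k : ℕ}
    (hlA : Antitone l) (hlf : (Function.support l).Finite)
    (hmA : Antitone m) (hmf : (Function.support m).Finite)
    (hionly : ∀ j, l (j + 1) < l j → j = i)
    (hkonly : ∀ j, m (j + 1) < m j → j = k)
    (hik : i < k)
    (h1 : l i = m i + 1) (h2 : m k = l k + 1)
    (hoff : ∀ j, j ≠ i → j ≠ k → l j = m j)
    (h3 : 3 ≤ deg l) : False := by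
  obtain ⟨hlc, hlz⟩ := rect hlA hlf hionly
  obtain ⟨hmc, hmz⟩ := rect hmA hmf hkonly
  have hlk : l k = 0 := hlz k hik
  have hmk : m k = 1 := by omega
  have hmi : m i = 1 := by
    have := hmc i (le_of_lt hik)
    omega
  have hli : l i = 2 := by omega
  have hi0 : i = 0 := by
    by_contra hc
    have h0i : (0:ℕ) ≠ i := fun h => hc h.symm
    have h0k : (0:ℕ) ≠ k := by omega
    have e1 : l 0 = m 0 := hoff 0 h0i h0k
    have e2 : l 0 = l i := hlc 0 (Nat.zero_le _)
    have e3 : m 0 = m k := hmc 0 (Nat.zero_le _)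
    omega
  subst hi0
  have : deg l = l 0 := deg_single (fun j hj => hlz j (by omega))
  omega

lemma inj {α γ : ℕ → ℕ}
    (hαA : Antitone α) (hγA : Antitone γ)
    (hαf : (Function.support α).Finite) (hγf : (Function.support γ).Finite)
    (hdeg : deg α = deg γ) (h3 : 3 ≤ deg α)
    (hset : ∀ x : ℕ → ℕ,
      (∃ i, α (i + 1) < α i ∧ Function.update α i (α i - 1) = x) ↔
      (∃ k, γ (k + 1) < γ k ∧ Function.update γ k (γ k - 1) = x))
    (hdrop : ∃ i, α (i + 1) < α i) :
    α = γ := by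
  by_contra hne
  obtain ⟨i0, hi0⟩ := hdrop
  obtain ⟨k0, hk0, he0⟩ := (hset _).1 ⟨i0, hi0, rfl⟩
  obtain ⟨hik0, hr1, hr2, hoff⟩ := rel hne hi0 hk0 he0.symm
  have hαonly : ∀ j, α (j + 1) < α j → j = i0 := by
    intro i1 hi1
    by_contra hne1
    obtain ⟨k1, hk1, he1⟩ := (hset _).1 ⟨i1, hi1, rfl⟩
    obtain ⟨hik1, hs1, hs2, hoff1⟩ := rel hne hi1 hk1 he1.symm
    rcases eq_or_ne i1 k0 with rfl | hne2
    · omega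
    · have := hoff i1 hne1 hne2
      omega
  have hγonly : ∀ j, γ (j + 1) < γ j → j = k0 := by
    intro k1 hk1
    by_contra hne1
    obtain ⟨i1, hi1, he1⟩ := (hset _).2 ⟨k1, hk1, rfl⟩
    obtain ⟨hik1, hs1, hs2, hoff1⟩ := rel hne hi1 hk1 he1
    rcases eq_or_ne k1 i0 with rfl | hne2
    · omega
    · have := hoff k1 hne2 hne1
      omega
  rcases lt_or_gt_of_ne hik0 with h | h
  · exact final hαA hαf hγA hγf hαonly hγonly h hr1 hr2 hoff h3
  · exact final hγA hγf hαA hαf hγonly hαonly h hr2 hr1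
      (fun j hjk hji => (hoff j hji hjk).symm) (hdeg ▸ h3)

/-! ### The symmetrized coefficient function -/

def Sm (l m x y : ℕ → ℕ) : ℤ :=
  (if y = m then (Nf l x : ℤ) else 0) + (if x = l then (Nf m y : ℤ) else 0)
    + (if y = l then (Nf m x : ℤ) else 0) + (if x = m then (Nf l y : ℤ) else 0)

lemma Sm_symm (l m x y : ℕ → ℕ) : Sm l m x y = Sm m l x y := by
  unfold Sm; ring

lemma main {α β γ δ : ℕ → ℕ} {n : ℕ} (hn : 4 ≤ n)
    (hαA : Antitone α) (hβA : Antitone β) (hγA : Antitone γ) (hδA : Antitone δ)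
    (hαF : (Function.support α).Finite) (hβF : (Function.support β).Finite)
    (hγF : (Function.support γ).Finite) (hδF : (Function.support δ).Finite)
    (hab : deg α + deg β = n) (hcd : deg γ + deg δ = n)
    (hba : deg β ≤ deg α) (hdc : deg δ ≤ deg γ) (hca : deg γ ≤ deg α)
    (hαβ : α ≠ β) (hγδ : γ ≠ δ)
    (ESm : ∀ x y, Sm α β x y = Sm γ δ x y) :
    (α = γ ∧ β = δ) ∨ (α = δ ∧ β = γ) := by
  have E : ∀ x y, (if y = β then (Nf α x : ℤ) else 0) + (if x = α then (Nf β y : ℤ) else 0)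
            + (if y = α then (Nf β x : ℤ) else 0) + (if x = β then (Nf α y : ℤ) else 0)
            = (if y = δ then (Nf γ x : ℤ) else 0) + (if x = γ then (Nf δ y : ℤ) else 0)
            + (if y = γ then (Nf δ x : ℤ) else 0) + (if x = δ then (Nf γ y : ℤ) else 0) := by
    intro x y
    have := ESm x y
    unfold Sm at this
    exact this
  clear ESm
  have hβα : β ≠ α := fun h => hαβ h.symm
  have hδγ : δ ≠ γ := fun h => hγδ h.symm
  have ha2 : 2 ≤ deg α := by omega
  have hc2 : 2 ≤ deg γ := by omega
  by_cases hb0 : deg β = 0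
  · by_cases hd0 : deg δ = 0
    · have hβ0 : β = fun _ => 0 := eq_zero_of_deg_eq_zero hβF hb0
      have hδ0 : δ = fun _ => 0 := eq_zero_of_deg_eq_zero hδF hd0
      have hβδ : β = δ := by rw [hβ0, hδ0]
      have hNβ : ∀ z, Nf β z = 0 := Nf_eq_zero_of_deg_eq_zero hβF hb0
      have hNδ : ∀ z, Nf δ z = 0 := Nf_eq_zero_of_deg_eq_zero hδF hd0
      have hNαβ : Nf α β = 0 := by
        by_contra hc; have := Nf_deg hαF hc; omega
      have hNγβ : Nf γ β = 0 := by
        by_contra hc; have := Nf_deg hγF hc; omega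
      have hβγ : β ≠ γ := ne_of_deg (by omega)
      have hN : ∀ x, Nf α x = Nf γ x := by
        intro x
        have hE := E x β
        rw [if_pos rfl, if_pos hβδ, if_neg hβα, if_neg hβγ, hNβ, hNδ, hNαβ, hNγβ] at hE
        simp only [Nat.cast_zero, ite_self, add_zero, zero_add] at hE
        exact_mod_cast hE
      have hαγ : α = γ := by
        refine inj hαA hγA hαF hγF (by omega) (by omega) ?_ ?_
        · intro x
          rw [← Nf_ne_zero_iff hαF, ← Nf_ne_zero_iff hγF, hN x]
        · exact exists_drop hαF (by omega)
      exact Or.inl ⟨hαγ, hβδ⟩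
    · exfalso
      obtain ⟨i, hi⟩ := exists_drop hγF (by omega)
      set x1 := Function.update γ i (γ i - 1) with hx1
      have hNγx1 : Nf γ x1 ≠ 0 := (Nf_ne_zero_iff hγF x1).2 ⟨i, hi, rfl⟩
      have hdx1 : deg x1 + 1 = deg γ := Nf_deg hγF hNγx1
      have hNβ : ∀ z, Nf β z = 0 := Nf_eq_zero_of_deg_eq_zero hβF hb0
      have hE := E x1 δ
      rw [if_neg (ne_of_deg (show deg δ ≠ deg β by omega)),
        if_neg (ne_of_deg (show deg x1 ≠ deg β by omega)),
        if_neg (ne_of_deg (show deg x1 ≠ deg γ by omega)),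
        if_neg hδγ, if_pos rfl, hNβ, hNβ] at hE
      simp only [Nat.cast_zero, ite_self, add_zero, zero_add] at hE
      by_cases h4 : x1 = δ
      · rw [if_pos h4] at hE; omega
      · rw [if_neg h4] at hE; omega
  · by_cases hd0 : deg δ = 0
    · exfalso
      obtain ⟨i, hi⟩ := exists_drop hαF (by omega)
      set x1 := Function.update α i (α i - 1) with hx1
      have hNαx1 : Nf α x1 ≠ 0 := (Nf_ne_zero_iff hαF x1).2 ⟨i, hi, rfl⟩
      have hdx1 : deg x1 + 1 = deg α := Nf_deg hαF hNαx1
      have hNδ : ∀ z, Nf δ z = 0 := Nf_eq_zero_of_deg_eq_zero hδF hd0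
      have hE := E x1 β
      rw [if_pos rfl,
        if_neg (ne_of_deg (show deg x1 ≠ deg α by omega)),
        if_neg hβα,
        if_neg (ne_of_deg (show deg β ≠ deg δ by omega)),
        if_neg (ne_of_deg (show deg x1 ≠ deg γ by omega)),
        if_neg (ne_of_deg (show deg x1 ≠ deg δ by omega)), hNδ] at hE
      simp only [Nat.cast_zero, ite_self, add_zero, zero_add] at hE
      by_cases h4 : x1 = β
      · rw [if_pos h4] at hE; omega
      · rw [if_neg h4] at hE; omega
    · rcases eq_or_lt_of_le hba with hbe | hblt
      · have hceq : deg γ = deg α := by omega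
        have hdeq : deg δ = deg α := by omega
        obtain ⟨i, hi⟩ := exists_drop hαF (by omega)
        set x0 := Function.update α i (α i - 1) with hx0
        have hNαx0 : Nf α x0 ≠ 0 := (Nf_ne_zero_iff hαF x0).2 ⟨i, hi, rfl⟩
        have hdx0 : deg x0 + 1 = deg α := Nf_deg hαF hNαx0
        obtain ⟨j, hj⟩ := exists_drop hβF (by omega)
        set y1 := Function.update β j (β j - 1) with hy1
        have hNβy1 : Nf β y1 ≠ 0 := (Nf_ne_zero_iff hβF y1).2 ⟨j, hj, rfl⟩
        have hdy1 : deg y1 + 1 = deg β := Nf_deg hβF hNβy1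
        have hE1 := E x0 β
        rw [if_pos rfl,
          if_neg (ne_of_deg (show deg x0 ≠ deg α by omega)),
          if_neg hβα,
          if_neg (ne_of_deg (show deg x0 ≠ deg β by omega)),
          if_neg (ne_of_deg (show deg x0 ≠ deg γ by omega)),
          if_neg (ne_of_deg (show deg x0 ≠ deg δ by omega))] at hE1
        simp only [add_zero, zero_add] at hE1
        by_cases hβδ : β = δ
        · have hE2 := E y1 α
          rw [if_neg hαβ,
            if_neg (ne_of_deg (show deg y1 ≠ deg α by omega)),
            if_pos rfl,
            if_neg (ne_of_deg (show deg y1 ≠ deg β by omega)),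
            if_neg (show α ≠ δ from fun h => hαβ (h.trans hβδ.symm)),
            if_neg (ne_of_deg (show deg y1 ≠ deg γ by omega)),
            if_neg (ne_of_deg (show deg y1 ≠ deg δ by omega))] at hE2
          simp only [add_zero, zero_add] at hE2
          by_cases hαγ : α = γ
          · exact Or.inl ⟨hαγ, hβδ⟩
          · rw [if_neg hαγ] at hE2; omega
        · by_cases hβγ : β = γ
          · have hE2 := E y1 α
            rw [if_neg hαβ,
              if_neg (ne_of_deg (show deg y1 ≠ deg α by omega)),
              if_pos rfl,
              if_neg (ne_of_deg (show deg y1 ≠ deg β by omega)),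
              if_neg (show α ≠ γ from fun h => hαβ (h.trans hβγ.symm)),
              if_neg (ne_of_deg (show deg y1 ≠ deg γ by omega)),
              if_neg (ne_of_deg (show deg y1 ≠ deg δ by omega))] at hE2
            simp only [add_zero, zero_add] at hE2
            by_cases hαδ : α = δ
            · exact Or.inr ⟨hαδ, hβγ⟩
            · rw [if_neg hαδ] at hE2; omega
          · rw [if_neg hβδ, if_neg hβγ] at hE1
            simp only [add_zero, zero_add] at hE1
            omega
      · obtain ⟨j, hj⟩ := exists_drop hβF (by omega)
        set y0 := Function.update β j (β j - 1) with hy0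
        have hNβy0 : Nf β y0 ≠ 0 := (Nf_ne_zero_iff hβF y0).2 ⟨j, hj, rfl⟩
        have hdy0 : deg y0 + 1 = deg β := Nf_deg hβF hNβy0
        have hNγα : Nf γ α = 0 := by
          by_contra hc; have := Nf_deg hγF hc; omega
        have hE1 := E α y0
        rw [if_neg (ne_of_deg (show deg y0 ≠ deg β by omega)),
          if_pos rfl,
          if_neg (ne_of_deg (show deg y0 ≠ deg α by omega)),
          if_neg hαβ, hNγα,
          if_neg (ne_of_deg (show deg y0 ≠ deg γ by omega)),
          if_neg (ne_of_deg (show deg α ≠ deg δ by omega))] at hE1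
        simp only [Nat.cast_zero, ite_self, add_zero, zero_add] at hE1
        by_cases hαγ : α = γ
        · have hdγα : deg γ = deg α := by rw [hαγ]
          obtain ⟨i, hi⟩ := exists_drop hαF (by omega)
          set x0 := Function.update α i (α i - 1) with hx0
          have hNαx0 : Nf α x0 ≠ 0 := (Nf_ne_zero_iff hαF x0).2 ⟨i, hi, rfl⟩
          have hdx0 : deg x0 + 1 = deg α := Nf_deg hαF hNαx0
          have hE2 := E x0 β
          rw [if_pos rfl,
            if_neg (ne_of_deg (show deg x0 ≠ deg α by omega)),
            if_neg hβα,
            if_neg (ne_of_deg (show deg x0 ≠ deg γ by omega)),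
            if_neg (ne_of_deg (show deg β ≠ deg γ by omega))] at hE2
          simp only [add_zero, zero_add] at hE2
          by_cases hβδ : β = δ
          · exact Or.inl ⟨hαγ, hβδ⟩
          · exfalso
            rw [if_neg hβδ] at hE2
            have hNγβ : Nf γ β ≠ 0 := by
              by_cases h5 : x0 = δ
              · rw [if_pos h5] at hE2
                by_cases h6 : x0 = β
                · rw [if_pos h6] at hE2; omega
                · rw [if_neg h6] at hE2; omega
              · rw [if_neg h5] at hE2
                by_cases h6 : x0 = β
                · rw [if_pos h6] at hE2; omega
                · rw [if_neg h6] at hE2; omega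
            have hNαβ : Nf α β ≠ 0 := by rwa [hαγ]
            have hE3 := E β β
            rw [if_pos rfl, if_neg hβα, if_neg hβδ,
              if_neg (ne_of_deg (show deg β ≠ deg γ by omega))] at hE3
            simp only [add_zero, zero_add] at hE3
            omega
        · rw [if_neg hαγ] at hE1
          omega

end Stmt4

/-- for `n ≥ 4` and bipartitions `(λ',λ'')`, `(μ',μ'')` of `n` with
`λ' ≠ λ''` and `μ' ≠ μ''`, if `ff_n(λ',λ'') + ff_n(λ'',λ') = ff_n(μ',μ'') + ff_n(μ'',μ')`
then the bipartitions agree up to swapping the two components. -/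
theorem statement4 (n : ℕ) (hn : 4 ≤ n) (p q : (ℕ → ℕ) × (ℕ → ℕ))
    (hp : IsBipartitionFun n p) (hq : IsBipartitionFun n q)
    (hp' : p.1 ≠ p.2) (hq' : q.1 ≠ q.2)
    (h : bipartDec p + bipartDec p.swap = bipartDec q + bipartDec q.swap) :
    p = q ∨ p = q.swap := by
  classical
  open Stmt4 in
  obtain ⟨a', b', ⟨hαA, hαF, hαS⟩, ⟨hβA, hβF, hβS⟩, habn⟩ := hp
  obtain ⟨c', d', ⟨hγA, hγF, hγS⟩, ⟨hδA, hδF, hδS⟩, hcdn⟩ := hq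
  have hda : Stmt4.deg p.1 = a' := hαS
  have hdb : Stmt4.deg p.2 = b' := hβS
  have hdc' : Stmt4.deg q.1 = c' := hγS
  have hdd : Stmt4.deg q.2 = d' := hδS
  have hab : Stmt4.deg p.1 + Stmt4.deg p.2 = n := by omega
  have hcd : Stmt4.deg q.1 + Stmt4.deg q.2 = n := by omega
  have e1 : bipartDec p = bipartDec (p.1, p.2) := by rw [Prod.mk.eta]
  have e2 : bipartDec p.swap = bipartDec (p.2, p.1) := rfl
  have e3 : bipartDec q = bipartDec (q.1, q.2) := by rw [Prod.mk.eta]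
  have e4 : bipartDec q.swap = bipartDec (q.2, q.1) := rfl
  have key : ∀ x y, Stmt4.Sm p.1 p.2 x y = Stmt4.Sm q.1 q.2 x y := by
    intro x y
    have h' := congrArg (Stmt4.cf x y) h
    rw [map_add, map_add, e1, e2, e3, e4,
      Stmt4.cf_bipartDec _ _ _ _ hαF hβF, Stmt4.cf_bipartDec _ _ _ _ hβF hαF,
      Stmt4.cf_bipartDec _ _ _ _ hγF hδF, Stmt4.cf_bipartDec _ _ _ _ hδF hγF] at h'
    unfold Stmt4.Sm
    linarith [h']
  have hqs : q.swap = (q.2, q.1) := rfl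
  -- eight-way case split on degree comparisons
  rcases le_total (Stmt4.deg p.2) (Stmt4.deg p.1) with h1 | h1
  · rcases le_total (Stmt4.deg q.2) (Stmt4.deg q.1) with h2 | h2
    · rcases le_total (Stmt4.deg q.1) (Stmt4.deg p.1) with h3 | h3
      · rcases Stmt4.main hn hαA hβA hγA hδA hαF hβF hγF hδF hab hcd h1 h2 h3 hp' hq'
          key with ⟨hh1, hh2⟩ | ⟨hh1, hh2⟩
        · exact Or.inl (Prod.ext hh1 hh2)
        · exact Or.inr (Prod.ext hh1 hh2)
      · rcases Stmt4.main hn hγA hδA hαA hβA hγF hδF hαF hβF hcd hab h2 h1 h3 hq' hp'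
          (fun x y => (key x y).symm) with ⟨hh1, hh2⟩ | ⟨hh1, hh2⟩
        · exact Or.inl (Prod.ext hh1.symm hh2.symm)
        · exact Or.inr (Prod.ext hh2.symm hh1.symm)
    · rcases le_total (Stmt4.deg q.2) (Stmt4.deg p.1) with h3 | h3
      · rcases Stmt4.main hn hαA hβA hδA hγA hαF hβF hδF hγF hab (by omega) h1 h2 h3 hp'
          (fun hh => hq' hh.symm)
          (fun x y => (key x y).trans (Stmt4.Sm_symm q.1 q.2 x y)) with ⟨hh1, hh2⟩ | ⟨hh1, hh2⟩
        · exact Or.inr (Prod.ext hh1 hh2)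
        · exact Or.inl (Prod.ext hh1 hh2)
      · rcases Stmt4.main hn hδA hγA hαA hβA hδF hγF hαF hβF (by omega) hab h2 h1 h3
          (fun hh => hq' hh.symm) hp'
          (fun x y => ((key x y).trans (Stmt4.Sm_symm q.1 q.2 x y)).symm)
          with ⟨hh1, hh2⟩ | ⟨hh1, hh2⟩
        · exact Or.inr (Prod.ext hh1.symm hh2.symm)
        · exact Or.inl (Prod.ext hh2.symm hh1.symm)
  · rcases le_total (Stmt4.deg q.2) (Stmt4.deg q.1) with h2 | h2
    · rcases le_total (Stmt4.deg q.1) (Stmt4.deg p.2) with h3 | h3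
      · rcases Stmt4.main hn hβA hαA hγA hδA hβF hαF hγF hδF (by omega) hcd h1 h2 h3
          (fun hh => hp' hh.symm) hq'
          (fun x y => (Stmt4.Sm_symm p.2 p.1 x y).trans (key x y)) with ⟨hh1, hh2⟩ | ⟨hh1, hh2⟩
        · exact Or.inr (Prod.ext hh2 hh1)
        · exact Or.inl (Prod.ext hh2 hh1)
      · rcases Stmt4.main hn hγA hδA hβA hαA hγF hδF hβF hαF hcd (by omega) h2 h1 h3 hq'
          (fun hh => hp' hh.symm)
          (fun x y => ((Stmt4.Sm_symm p.2 p.1 x y).trans (key x y)).symm)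
          with ⟨hh1, hh2⟩ | ⟨hh1, hh2⟩
        · exact Or.inr (Prod.ext hh2.symm hh1.symm)
        · exact Or.inl (Prod.ext hh1.symm hh2.symm)
    · rcases le_total (Stmt4.deg q.2) (Stmt4.deg p.2) with h3 | h3
      · rcases Stmt4.main hn hβA hαA hδA hγA hβF hαF hδF hγF (by omega) (by omega) h1 h2 h3
          (fun hh => hp' hh.symm) (fun hh => hq' hh.symm)
          (fun x y => (Stmt4.Sm_symm p.2 p.1 x y).trans
            ((key x y).trans (Stmt4.Sm_symm q.1 q.2 x y))) with ⟨hh1, hh2⟩ | ⟨hh1, hh2⟩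
        · exact Or.inl (Prod.ext hh2 hh1)
        · exact Or.inr (Prod.ext hh2 hh1)
      · rcases Stmt4.main hn hδA hγA hβA hαA hδF hγF hβF hαF (by omega) (by omega) h2 h1 h3
          (fun hh => hq' hh.symm) (fun hh => hp' hh.symm)
          (fun x y => ((Stmt4.Sm_symm p.2 p.1 x y).trans
            ((key x y).trans (Stmt4.Sm_symm q.1 q.2 x y))).symm)
          with ⟨hh1, hh2⟩ | ⟨hh1, hh2⟩
        · exact Or.inl (Prod.ext hh2.symm hh1.symm)
        · exact Or.inr (Prod.ext hh1.symm hh2.symm)
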